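/- The number of binary spin configurations of length N with periodic boundary conditions, total magnetization M (with N and M of the same parity, |M| < N), and exactly 2S defects (adjacent opposite-spin pairs), equals binom((N+M)/2 - 1, S-1)*binom((N-M)/2, S) + binom((N-M)/2 - 1, S-1)*binom((N+M)/2, S). -/
import Mathlib

open Finset

def comp (m k : ℕ) : ℕ :=
  if k = 0 then (if m = 0 then 1 else 0)
  else if m = 0 then 0 else (m-1).choose (k-1)

lemma comp_eq_zero {m k : ℕ} (h : m < k) : comp m k = 0 := by
  rcases k with _ | k
  · omega
  · rcases m with _ | m
    · simp [comp]
    · simp only [comp, Nat.succ_ne_zero, if_false]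
      exact Nat.choose_eq_zero_of_lt (by omega)

lemma comp_zero_succ (k : ℕ) : comp 0 (k+1) = 0 := by simp [comp]

def trues {n : ℕ} (w : Fin n → Bool) : ℕ := (univ.filter fun i => w i = true).card
def desc {n : ℕ} (w : Fin (n+1) → Bool) : ℕ :=
  (univ.filter fun i : Fin n => w i.castSucc ≠ w i.succ).card
def lin (n p d : ℕ) (b e : Bool) : ℕ :=
  (univ.filter fun w : Fin (n+1) → Bool =>
    w 0 = b ∧ w (Fin.last n) = e ∧ trues w = p ∧ desc w = d).card
def clf (n p d : ℕ) (b e : Bool) : ℕ :=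
  if b = e then
    if d % 2 = 0 then
      comp (if b then p else n+1-p) (d/2+1) * comp (if b then n+1-p else p) (d/2)
    else 0
  else
    if d % 2 = 1 then
      comp (if b then p else n+1-p) (d/2+1) * comp (if b then n+1-p else p) (d/2+1)
    else 0

lemma comp_pascal (m k : ℕ) (hm : 1 ≤ m) :
    comp m (k+1) = comp (m-1) (k+1) + comp (m-1) k := by
  obtain ⟨m', rfl⟩ := Nat.exists_eq_add_of_le hm
  cases m' with
  | zero => cases k <;> simp [comp]
  | succ m'' =>
    cases k with
    | zero => simp [comp]
    | succ k' =>
      simp only [comp, Nat.add_eq_zero, Nat.succ_ne_zero, and_false, if_false,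
        false_and, if_neg (by omega : ¬(1 + (m''+1) = 0)), if_neg (by omega : ¬(1 + (m''+1) - 1 = 0))]
      have h1 : 1 + (m'' + 1) - 1 = m'' + 1 := by omega
      have h2 : m'' + 1 - 1 = m'' := by omega
      have h3 : k' + 1 + 1 - 1 = k' + 1 := by omega
      have h4 : k' + 1 - 1 = k' := by omega
      rw [h1, h2, h3, h4, Nat.choose_succ_succ]
      simp [Nat.succ_eq_add_one, Nat.add_comm]

lemma trues_one (w : Fin 1 → Bool) : trues w = if w 0 then 1 else 0 := by
  rw [trues, Finset.card_filter, Fin.sum_univ_one]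

lemma desc_one (w : Fin 1 → Bool) : desc w = 0 := by
  simp [desc]

lemma lin_zero (p d : ℕ) (b e : Bool) :
    lin 0 p d b e = if b = e ∧ d = 0 ∧ p = (if b then 1 else 0) then 1 else 0 := by
  unfold lin
  by_cases h : b = e ∧ d = 0 ∧ p = (if b then 1 else 0)
  · rw [if_pos h]
    obtain ⟨hbe, hd, hp⟩ := h
    rw [show (univ.filter fun w : Fin 1 → Bool =>
        w 0 = b ∧ w (Fin.last 0) = e ∧ trues w = p ∧ desc w = d) = {fun _ => b} from ?_]
    · simp
    · ext w
      simp only [mem_filter, mem_univ, true_and, mem_singleton]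
      constructor
      · rintro ⟨h0, -, -, -⟩
        funext i
        rw [Subsingleton.elim i 0, h0]
      · rintro rfl
        refine ⟨rfl, hbe ▸ rfl, ?_, by simp [desc_one, hd]⟩
        rw [trues_one]; cases b <;> simp_all
  · rw [if_neg h]
    rw [Finset.card_eq_zero, Finset.filter_eq_empty_iff]
    intro w _
    rintro ⟨h0, hl, ht, hd⟩
    rw [show (Fin.last 0) = 0 from rfl] at hl
    apply h
    refine ⟨by rw [← h0, ← hl], by rw [← hd, desc_one], ?_⟩
    rw [← ht, trues_one, h0]

lemma trues_snoc {n : ℕ} (v : Fin n → Bool) (e : Bool) :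
    trues (Fin.snoc v e) = trues v + (if e then 1 else 0) := by
  simp only [trues, Finset.card_filter, Fin.sum_univ_castSucc, Fin.snoc_castSucc, Fin.snoc_last]
lemma desc_snoc {n : ℕ} (v : Fin (n+1) → Bool) (e : Bool) :
    desc (Fin.snoc v e) = desc v + (if v (Fin.last n) = e then 0 else 1) := by
  simp only [desc, Finset.card_filter, Fin.sum_univ_castSucc]
  congr 1
  · apply Finset.sum_congr rfl
    intro i _
    rw [Fin.succ_castSucc]
    rw [show (Fin.castSucc i.castSucc) = (i.castSucc).castSucc from rfl]
    rw [Fin.snoc_castSucc, Fin.snoc_castSucc]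
  · rw [show ((Fin.last n).succ) = Fin.last (n+1) from rfl, Fin.snoc_last, Fin.snoc_castSucc]
    by_cases h : v (Fin.last n) = e <;> simp [h]

lemma bool_ne_iff {a b : Bool} : ¬ a = b ↔ a = !b := by
  cases a <;> cases b <;> simp

lemma lin_succ (n p d : ℕ) (b e : Bool) (hp : ¬(e = true ∧ p = 0)) :
    lin (n+1) p d b e =
      lin n (p - if e then 1 else 0) d b e
        + (if d = 0 then 0
           else lin n (p - if e then 1 else 0) (d-1) b (!e)) := by
  set p' := p - (if e then 1 else 0) with hp'
  have hpe : p = p' + (if e then 1 else 0) := by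
    rcases e with _ | _ <;> simp_all [hp'] <;> omega
  have key : lin (n+1) p d b e =
      (univ.filter fun v : Fin (n+1) → Bool =>
        v 0 = b ∧ trues v = p' ∧ desc v + (if v (Fin.last n) = e then 0 else 1) = d).card := by
    unfold lin
    apply Finset.card_bij' (fun w _ => w ∘ Fin.castSucc) (fun v _ => Fin.snoc v e)
    · intro w hw
      rw [Finset.mem_filter] at hw ⊢
      obtain ⟨-, h0, hl, ht, hd⟩ := hw
      have hsnoc : w = Fin.snoc (w ∘ Fin.castSucc) e := by
        funext i
        refine Fin.lastCases ?_ ?_ i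
        · rw [Fin.snoc_last, hl]
        · intro j; rw [Fin.snoc_castSucc]; rfl
      refine ⟨Finset.mem_univ _, ?_, ?_, ?_⟩
      · show w (Fin.castSucc 0) = b
        rw [Fin.castSucc_zero, h0]
      · rw [hsnoc, trues_snoc] at ht
        omega
      · rw [hsnoc, desc_snoc] at hd
        exact hd
    · intro v hv
      rw [Finset.mem_filter] at hv ⊢
      obtain ⟨-, h0, ht, hd⟩ := hv
      refine ⟨Finset.mem_univ _, ?_, ?_, ?_, ?_⟩
      · rw [← Fin.castSucc_zero, Fin.snoc_castSucc, h0]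
      · rw [Fin.snoc_last]
      · rw [trues_snoc, ht]; omega
      · rw [desc_snoc]; exact hd
    · intro w hw
      rw [Finset.mem_filter] at hw
      obtain ⟨-, -, hl, -, -⟩ := hw
      funext i
      refine Fin.lastCases ?_ ?_ i
      · rw [Fin.snoc_last, hl]
      · intro j; rw [Fin.snoc_castSucc]; rfl
    · intro v _
      funext i
      simp only [Function.comp_apply, Fin.snoc_castSucc]
  rw [key,
    ← Finset.card_filter_add_card_filter_not (p := fun v => v (Fin.last n) = e)]
  clear key
  congr 1
  · rw [Finset.filter_filter]
    unfold lin
    congr 1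
    apply Finset.filter_congr
    intro v _
    constructor
    · rintro ⟨⟨h0, ht, hd⟩, hl⟩
      rw [if_pos hl] at hd
      exact ⟨h0, hl, ht, by omega⟩
    · rintro ⟨h0, hl, ht, hd⟩
      exact ⟨⟨h0, ht, by rw [if_pos hl]; omega⟩, hl⟩
  · rw [Finset.filter_filter]
    by_cases hd0 : d = 0
    · rw [if_pos hd0, Finset.card_eq_zero, Finset.filter_eq_empty_iff]
      rintro v - ⟨⟨-, -, hdd⟩, hne⟩
      rw [if_neg hne] at hdd
      omega
    · rw [if_neg hd0]
      unfold lin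
      congr 1
      apply Finset.filter_congr
      intro v _
      constructor
      · rintro ⟨⟨h0, ht, hd⟩, hl⟩
        rw [if_neg hl] at hd
        refine ⟨h0, bool_ne_iff.mp hl, ht, by omega⟩
      · rintro ⟨h0, hl, ht, hd⟩
        have hne : ¬ (v (Fin.last n) = e) := bool_ne_iff.mpr hl
        exact ⟨⟨h0, ht, by rw [if_neg hne]; omega⟩, hne⟩

lemma compA (x y k : ℕ) (hx : 1 ≤ x) (hxy : 2 ≤ x + y) :
    comp x (k+1) * comp y k
      = comp (x-1) (k+1) * comp y k + (if k = 0 then 0 else comp (x-1) k * comp y k) := by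
  cases k with
  | zero =>
    simp only [if_pos rfl, Nat.add_zero]
    rcases Nat.eq_zero_or_pos y with hy | hy
    · subst hy
      have hx2 : 2 ≤ x := by omega
      have e1 : comp x 1 = 1 := by
        simp [comp]; omega
      have e2 : comp (x-1) 1 = 1 := by
        simp [comp]; omega
      rw [e1, e2]
      simp
    · have : comp y 0 = 0 := by
        simp [comp]; omega
      simp [this]
  | succ k' =>
    rw [if_neg (Nat.succ_ne_zero k'), comp_pascal x (k'+1) hx, Nat.add_mul]
lemma compB (x y k : ℕ) (hy : 1 ≤ y) :
    comp x (k+1) * comp y (k+1)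
      = comp x (k+1) * comp (y-1) (k+1) + comp x (k+1) * comp (y-1) k := by
  rw [comp_pascal y k hy, Nat.mul_add]

lemma clf_rec (n p d : ℕ) (b e : Bool) (h1 : ¬(e = true ∧ p = 0))
    (h2 : ¬(e = false ∧ p = n+2)) (hp : p ≤ n+2) :
    clf (n+1) p d b e = clf n (p - if e then 1 else 0) d b e
      + (if d = 0 then 0 else clf n (p - if e then 1 else 0) (d-1) b (!e)) := by
  cases b <;> cases e <;>
    simp only [clf, Bool.false_eq_true, Bool.true_eq_false, if_false, if_pos,
      Bool.not_true, Bool.not_false, Nat.sub_zero]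
  -- case false false
  · have hple : p ≤ n+1 := by
      rcases Nat.lt_or_ge p (n+2) with h | h
      · omega
      · exact absurd ⟨rfl, by omega⟩ h2
    have hx : 1 ≤ n+2-p := by omega
    have hyx : n+1-p = (n+2-p) - 1 := by omega
    rcases Nat.even_or_odd d with ⟨k, hk⟩ | ⟨k, hk⟩
    · -- d = 2k
      subst hk
      have e0 : k + k = 2 * k := by omega
      rw [e0]
      have m1 : 2*k % 2 = 0 := by omega
      have m2 : 2*k / 2 = k := by omega
      rw [m1, m2, if_pos rfl, if_pos rfl]
      cases k with
      | zero =>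
        simp only [Nat.mul_zero, if_pos rfl, Nat.add_zero, Nat.zero_add]
        rw [hyx]
        exact compA (n+2-p) p 0 hx (by omega)
      | succ k' =>
        have hd0 : ¬ (2*(k'+1) = 0) := by omega
        rw [if_neg hd0]
        have m3 : (2*(k'+1)-1) % 2 = 1 := by omega
        have m4 : (2*(k'+1)-1) / 2 = k' := by omega
        rw [m3, m4, if_pos rfl, hyx]
        exact compA (n+2-p) p (k'+1) hx (by omega)
    · -- d = 2k+1 : everything zero
      subst hk
      have m1 : ¬ ((2*k+1) % 2 = 0) := by omega
      have m2 : ¬ ((2*k+1-1) % 2 = 1) := by omega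
      rw [if_neg m1, if_neg m1, if_neg m2]
      simp
  · -- case b = false, e = true : p ≥ 1
    have hp1 : 1 ≤ p := by
      rcases Nat.eq_zero_or_pos p with h | h
      · exact absurd ⟨rfl, h⟩ h1
      · exact h
    have hyx : n+1-(p-1) = n+2-p := by omega
    rcases Nat.even_or_odd d with ⟨k, hk⟩ | ⟨k, hk⟩
    · -- d = 2k even: mismatch needs odd: all zero
      subst hk
      have e0 : k + k = 2 * k := by omega
      rw [e0]
      have m1 : ¬ ((2*k) % 2 = 1) := by omega
      rw [if_neg m1, if_neg m1]
      cases k with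
      | zero => simp
      | succ k' =>
        have hd0 : ¬ (2*(k'+1) = 0) := by omega
        rw [if_neg hd0]
        have m2 : ¬ ((2*(k'+1)-1) % 2 = 0) := by omega
        rw [if_neg m2]
    · subst hk
      have m1 : (2*k+1) % 2 = 1 := by omega
      have m2 : (2*k+1) / 2 = k := by omega
      have m3 : ¬ (2*k+1 = 0) := by omega
      have m4 : (2*k+1-1) % 2 = 0 := by omega
      have m5 : (2*k+1-1) / 2 = k := by omega
      rw [m1, m2, if_pos rfl, if_pos rfl, if_neg m3, m4, m5, if_pos rfl, hyx]
      exact compB (n+2-p) p k hp1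
  · -- case b = true, e = false : p ≤ n+1
    have hple : p ≤ n+1 := by
      rcases Nat.lt_or_ge p (n+2) with h | h
      · omega
      · exact absurd ⟨rfl, by omega⟩ h2
    have hy : 1 ≤ n+2-p := by omega
    have hyx : n+1-p = (n+2-p) - 1 := by omega
    rcases Nat.even_or_odd d with ⟨k, hk⟩ | ⟨k, hk⟩
    · subst hk
      have e0 : k + k = 2 * k := by omega
      rw [e0]
      have m1 : ¬ ((2*k) % 2 = 1) := by omega
      rw [if_neg m1, if_neg m1]
      cases k with
      | zero => simp
      | succ k' =>
        have hd0 : ¬ (2*(k'+1) = 0) := by omega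
        rw [if_neg hd0]
        have m2 : ¬ ((2*(k'+1)-1) % 2 = 0) := by omega
        rw [if_neg m2]
    · subst hk
      have m1 : (2*k+1) % 2 = 1 := by omega
      have m2 : (2*k+1) / 2 = k := by omega
      have m3 : ¬ (2*k+1 = 0) := by omega
      have m4 : (2*k+1-1) % 2 = 0 := by omega
      have m5 : (2*k+1-1) / 2 = k := by omega
      rw [m1, m2, if_pos rfl, if_pos rfl, if_neg m3, m4, m5, if_pos rfl, hyx]
      exact compB p (n+2-p) k hy
  · -- case b = true, e = true : p ≥ 1
    have hp1 : 1 ≤ p := by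
      rcases Nat.eq_zero_or_pos p with h | h
      · exact absurd ⟨rfl, h⟩ h1
      · exact h
    have hyx : n+1-(p-1) = n+2-p := by omega
    rcases Nat.even_or_odd d with ⟨k, hk⟩ | ⟨k, hk⟩
    · subst hk
      have e0 : k + k = 2 * k := by omega
      rw [e0]
      have m1 : 2*k % 2 = 0 := by omega
      have m2 : 2*k / 2 = k := by omega
      rw [m1, m2, if_pos rfl, if_pos rfl]
      cases k with
      | zero =>
        simp only [Nat.mul_zero, if_pos rfl, Nat.add_zero, Nat.zero_add]
        rw [hyx]
        exact compA p (n+2-p) 0 hp1 (by omega)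
      | succ k' =>
        have hd0 : ¬ (2*(k'+1) = 0) := by omega
        rw [if_neg hd0]
        have m3 : (2*(k'+1)-1) % 2 = 1 := by omega
        have m4 : (2*(k'+1)-1) / 2 = k' := by omega
        rw [m3, m4, if_pos rfl, hyx]
        exact compA p (n+2-p) (k'+1) hp1 (by omega)
    · subst hk
      have m1 : ¬ ((2*k+1) % 2 = 0) := by omega
      have m2 : ¬ ((2*k+1-1) % 2 = 1) := by omega
      rw [if_neg m1, if_neg m1, if_neg m2]
      simp


lemma trues_eq_zero {n : ℕ} {w : Fin n → Bool} (h : trues w = 0) (i : Fin n) : w i = false := by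
  rw [trues, Finset.card_eq_zero, Finset.filter_eq_empty_iff] at h
  have := h (Finset.mem_univ i)
  simpa using this

lemma trues_eq_card {n : ℕ} {w : Fin n → Bool} (h : trues w = n) (i : Fin n) : w i = true := by
  rw [trues] at h
  have : (univ.filter fun i => w i = true) = univ := by
    apply Finset.eq_univ_of_card
    rw [h, Fintype.card_fin]
  have hm := this ▸ Finset.mem_univ i
  exact (Finset.mem_filter.mp hm).2

lemma lin_p_zero (n d : ℕ) (b : Bool) : lin n 0 d b true = 0 := by
  rw [lin, Finset.card_eq_zero, Finset.filter_eq_empty_iff]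
  rintro w - ⟨-, hl, ht, -⟩
  have := trues_eq_zero ht (Fin.last n)
  rw [hl] at this
  exact Bool.noConfusion this

lemma lin_full (n d : ℕ) (b : Bool) : lin n (n+1) d b false = 0 := by
  rw [lin, Finset.card_eq_zero, Finset.filter_eq_empty_iff]
  rintro w - ⟨-, hl, ht, -⟩
  have := trues_eq_card ht (Fin.last n)
  rw [hl] at this
  exact Bool.noConfusion this

lemma clf_p_zero (n d : ℕ) (b : Bool) : clf n 0 d b true = 0 := by
  cases b <;>
    simp [clf, comp_zero_succ]

lemma clf_full (n d : ℕ) (b : Bool) : clf n (n+1) d b false = 0 := by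
  cases b <;>
    simp [clf, comp_zero_succ]

lemma lin_eq_clf : ∀ n p d b e, p ≤ n+1 → lin n p d b e = clf n p d b e := by
  intro n
  induction n with
  | zero =>
    intro p d b e hp
    rw [lin_zero]
    cases b <;> cases e <;>
      simp only [clf, Bool.false_eq_true, Bool.true_eq_false, eq_self_iff_true,
        true_and, false_and, if_true, if_false, Nat.sub_zero]
    · -- b = e = false : LHS if (d = 0 ∧ p = 0)
      by_cases hd : d = 0
      · subst hd
        rcases Nat.eq_zero_or_pos p with rfl | hp1
        · norm_num [comp]
        · have hp1' : p = 1 := by omega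
          subst hp1'
          norm_num [comp]
      · rw [if_neg (by tauto)]
        have hd2 : d % 2 = 0 → 2 ≤ d / 2 + 1 := by omega
        by_cases hpar : d % 2 = 0
        · rw [if_pos hpar]
          rw [comp_eq_zero (by omega : 1 - p < d/2+1)]
          simp
        · rw [if_neg hpar]
    · -- b = false, e = true : LHS 0
      by_cases hpar : d % 2 = 1
      · rw [if_pos hpar]
        rcases Nat.eq_zero_or_pos p with rfl | hp1
        · rw [comp_zero_succ]; simp
        · have hp1' : p = 1 := by omega
          subst hp1'
          rw [show (1:ℕ) - 1 = 0 from rfl, comp_zero_succ]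
          simp
      · rw [if_neg hpar]
    · -- b = true, e = false : LHS 0
      by_cases hpar : d % 2 = 1
      · rw [if_pos hpar]
        rcases Nat.eq_zero_or_pos p with rfl | hp1
        · rw [comp_zero_succ]; simp
        · have hp1' : p = 1 := by omega
          subst hp1'
          rw [show (1:ℕ) - 1 = 0 from rfl, comp_zero_succ]
          simp
      · rw [if_neg hpar]
    · -- b = e = true : LHS if (d = 0 ∧ p = 1)
      by_cases hd : d = 0
      · subst hd
        rcases Nat.eq_zero_or_pos p with rfl | hp1
        · norm_num [comp]
        · have hp1' : p = 1 := by omega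
          subst hp1'
          norm_num [comp]
      · rw [if_neg (by tauto)]
        by_cases hpar : d % 2 = 0
        · rw [if_pos hpar]
          rw [comp_eq_zero (by omega : p < d/2+1)]
          simp
        · rw [if_neg hpar]
  | succ n ih =>
    intro p d b e hp
    by_cases hc1 : e = true ∧ p = 0
    · obtain ⟨rfl, rfl⟩ := hc1
      rw [lin_p_zero, clf_p_zero]
    by_cases hc2 : e = false ∧ p = n+2
    · obtain ⟨rfl, rfl⟩ := hc2
      rw [lin_full, clf_full]
    rw [lin_succ n p d b e hc1, clf_rec n p d b e hc1 hc2 hp]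
    have hple : p - (if e then 1 else 0) ≤ n + 1 := by
      cases e
      · have h2' : ¬ p = n+2 := fun h => hc2 ⟨rfl, h⟩
        simp only [Bool.false_eq_true, if_false, Nat.sub_zero]
        omega
      · simp only [eq_self_iff_true, if_true]
        omega
    rw [ih _ d b e hple, ih _ (d-1) b (!e) hple]


/-- Binomial coefficient on integers: zero when either argument is negative. -/
def intChoose (n k : ℤ) : ℕ :=
  if 0 ≤ n ∧ 0 ≤ k then n.toNat.choose k.toNat else 0

lemma cyc_card {n : ℕ} (w : Fin (n+1) → Bool) :
    (univ.filter fun i : Fin (n+1) => ¬ w i = w (i+1)).card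
      = desc w + (if w (Fin.last n) = w 0 then 0 else 1) := by
  rw [Finset.card_filter, Fin.sum_univ_castSucc]
  congr 1
  · rw [desc, Finset.card_filter]
    apply Finset.sum_congr rfl
    intro i _
    rw [Fin.coeSucc_eq_succ]
  · rw [Fin.last_add_one]
    by_cases h : w (Fin.last n) = w 0 <;> simp [h]

lemma mag_eq {n : ℕ} (w : Fin (n+1) → Bool) :
    (∑ i, (if w i then (1:ℤ) else -1)) = 2 * (trues w : ℤ) - (n+1) := by
  have h : ∀ i, (if w i then (1:ℤ) else -1) = 2 * (if w i = true then (1:ℤ) else 0) - 1 := by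
    intro i; cases w i <;> simp
  rw [Finset.sum_congr rfl (fun i _ => h i), Finset.sum_sub_distrib, ← Finset.mul_sum,
    Finset.sum_boole]
  simp only [trues, Finset.sum_const, Finset.card_univ, Fintype.card_fin, nsmul_eq_mul, mul_one]
  push_cast
  ring

lemma cyccount (n p S : ℕ) (b : Bool) :
    (univ.filter fun w : Fin (n+1) → Bool =>
      (trues w = p ∧ desc w + (if w (Fin.last n) = w 0 then 0 else 1) = 2*S) ∧ w 0 = b).card
    = lin n p (2*S) b b + (if S = 0 then 0 else lin n p (2*S-1) b (!b)) := by
  rw [← Finset.card_filter_add_card_filter_not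
      (p := fun w => w (Fin.last n) = b), Finset.filter_filter, Finset.filter_filter]
  congr 1
  · unfold lin
    congr 1
    apply Finset.filter_congr
    intro w _
    constructor
    · rintro ⟨⟨⟨ht, hd⟩, h0⟩, hl⟩
      rw [h0, hl, if_pos rfl] at hd
      exact ⟨h0, hl, ht, by omega⟩
    · rintro ⟨h0, hl, ht, hd⟩
      exact ⟨⟨⟨ht, by rw [h0, hl, if_pos rfl]; omega⟩, h0⟩, hl⟩
  · by_cases hS : S = 0
    · subst hS
      rw [if_pos rfl, Finset.card_eq_zero, Finset.filter_eq_empty_iff]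
      rintro w - ⟨⟨⟨ht, hd⟩, h0⟩, hl⟩
      rw [h0, if_neg hl] at hd
      omega
    · rw [if_neg hS]
      unfold lin
      congr 1
      apply Finset.filter_congr
      intro w _
      constructor
      · rintro ⟨⟨⟨ht, hd⟩, h0⟩, hl⟩
        rw [h0, if_neg hl] at hd
        exact ⟨h0, bool_ne_iff.mp hl, ht, by omega⟩
      · rintro ⟨h0, hl, ht, hd⟩
        have hne : ¬ w (Fin.last n) = b := bool_ne_iff.mpr hl
        exact ⟨⟨⟨ht, by rw [h0, if_neg hne]; omega⟩, h0⟩, hne⟩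

lemma intChoose_natCast (a b : ℕ) : intChoose (a : ℤ) (b : ℤ) = a.choose b := by
  simp [intChoose]

/-- The number of cyclic spin configurations of length `N` with total magnetization `M`
(same parity as `N`, `|M| < N`) and exactly `2S` defects. -/
theorem stmt0 (N : ℕ) [NeZero N] (M : ℤ) (S : ℕ)
    (hpar : (N : ℤ) % 2 = M % 2) (hM : |M| < N) :
    (Finset.univ.filter (fun s : ZMod N → Bool =>
        (∑ i, (if s i then (1 : ℤ) else -1)) = M ∧
        (Finset.univ.filter (fun i => s i ≠ s (i + 1))).card = 2 * S)).card
      = intChoose (((N : ℤ) + M) / 2 - 1) ((S : ℤ) - 1) * intChoose (((N : ℤ) - M) / 2) (S : ℤ)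
        + intChoose (((N : ℤ) - M) / 2 - 1) ((S : ℤ) - 1) * intChoose (((N : ℤ) + M) / 2) (S : ℤ) := by
  obtain ⟨n, rfl⟩ : ∃ n, N = n + 1 := ⟨N - 1, by have := NeZero.ne N; omega⟩
  rw [abs_lt] at hM
  push_cast at hM hpar
  obtain ⟨hMgt, hMlt⟩ := hM
  obtain ⟨p, hp2⟩ : ∃ p : ℕ, (p:ℤ) * 2 = (n:ℤ) + 1 + M := by
    refine ⟨((n : ℤ) + 1 + M).toNat / 2, ?_⟩
    have h1 : ((n : ℤ) + 1 + M) % 2 = 0 := by omega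
    have h2 : 0 ≤ (n : ℤ) + 1 + M := by omega
    omega
  have hp1 : 1 ≤ p := by omega
  have hpn : p ≤ n := by omega
  have hq1 : 1 ≤ n + 1 - p := by omega
  have hconv : (Finset.univ.filter (fun s : ZMod (n+1) → Bool =>
        (∑ i, (if s i then (1 : ℤ) else -1)) = M ∧
        (Finset.univ.filter (fun i => s i ≠ s (i + 1))).card = 2 * S)).card
      = (Finset.univ.filter (fun w : Fin (n+1) → Bool =>
        (∑ i, (if w i then (1 : ℤ) else -1)) = M ∧
        (Finset.univ.filter (fun i => ¬ w i = w (i + 1))).card = 2 * S)).card := rfl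
  rw [hconv]
  clear hconv
  have hPQ : (Finset.univ.filter (fun w : Fin (n+1) → Bool =>
        (∑ i, (if w i then (1 : ℤ) else -1)) = M ∧
        (Finset.univ.filter (fun i => ¬ w i = w (i + 1))).card = 2 * S))
      = (Finset.univ.filter (fun w : Fin (n+1) → Bool =>
        trues w = p ∧ desc w + (if w (Fin.last n) = w 0 then 0 else 1) = 2*S)) := by
    apply Finset.filter_congr
    intro w _
    rw [mag_eq, cyc_card]
    constructor
    · rintro ⟨h1, h2⟩
      exact ⟨by omega, h2⟩
    · rintro ⟨h1, h2⟩
      exact ⟨by omega, h2⟩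
  rw [hPQ]
  clear hPQ
  rw [← Finset.card_filter_add_card_filter_not (p := fun w => w 0 = true),
    Finset.filter_filter, Finset.filter_filter]
  have hneg : (Finset.univ.filter (fun w : Fin (n+1) → Bool =>
        (trues w = p ∧ desc w + (if w (Fin.last n) = w 0 then 0 else 1) = 2*S) ∧ ¬ w 0 = true))
      = (Finset.univ.filter (fun w : Fin (n+1) → Bool =>
        (trues w = p ∧ desc w + (if w (Fin.last n) = w 0 then 0 else 1) = 2*S) ∧ w 0 = false)) := by
    apply Finset.filter_congr
    intro w _
    rw [Bool.not_eq_true]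
  rw [hneg, cyccount n p S true, cyccount n p S false]
  clear hneg
  simp only [Bool.not_true, Bool.not_false]
  have hple : p ≤ n + 1 := by omega
  rw [lin_eq_clf n p (2*S) true true hple, lin_eq_clf n p (2*S) false false hple]
  by_cases hS : S = 0
  · subst hS
    rw [if_pos rfl, if_pos rfl]
    have c1 : clf n p (2*0) true true = comp p 1 * comp (n+1-p) 0 := by
      simp [clf]
    have c2 : clf n p (2*0) false false = comp (n+1-p) 1 * comp p 0 := by
      simp [clf]
    rw [c1, c2]
    have z1 : comp (n+1-p) 0 = 0 := by simp [comp]; omega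
    have z2 : comp p 0 = 0 := by simp [comp]; omega
    rw [z1, z2]
    have hz : ∀ x : ℤ, intChoose x (((0:ℕ):ℤ) - 1) = 0 := by
      intro x
      simp only [intChoose]
      rw [if_neg]
      rintro ⟨-, h⟩
      omega
    rw [hz, hz]
    simp
  · rw [if_neg hS, if_neg hS,
      lin_eq_clf n p (2*S-1) true false hple, lin_eq_clf n p (2*S-1) false true hple]
    have m0 : (2*S) % 2 = 0 := by omega
    have m1 : (2*S) / 2 = S := by omega
    have m2 : (2*S-1) % 2 = 1 := by omega
    have m3' : (2*S-1) / 2 = S - 1 := by omega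
    have c1 : clf n p (2*S) true true = comp p (S+1) * comp (n+1-p) S := by
      simp only [clf, eq_self_iff_true, if_true, m0, m1]
    have c2 : clf n p (2*S) false false = comp (n+1-p) (S+1) * comp p S := by
      simp only [clf, eq_self_iff_true, if_true, m0, m1, Bool.false_eq_true, if_false]
    have c3 : clf n p (2*S-1) true false = comp p S * comp (n+1-p) S := by
      simp only [clf, Bool.true_eq_false, if_false, m2, eq_self_iff_true, if_true, m3']
      rw [show S - 1 + 1 = S by omega]
    have c4 : clf n p (2*S-1) false true = comp (n+1-p) S * comp p S := by
      simp only [clf, Bool.false_eq_true, if_false, m2, eq_self_iff_true, if_true, m3']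
      rw [show S - 1 + 1 = S by omega]
    rw [c1, c2, c3, c4]
    obtain ⟨p', rfl⟩ : ∃ p', p = p' + 1 := ⟨p - 1, by omega⟩
    obtain ⟨q', hqq⟩ : ∃ q', n + 1 - (p' + 1) = q' + 1 := ⟨n - p' - 1, by omega⟩
    obtain ⟨S', rfl⟩ : ∃ S', S = S' + 1 := ⟨S - 1, by omega⟩
    rw [hqq]
    have e1 : ∀ m k : ℕ, comp (m+1) (k+1) = m.choose k := by
      intro m k; simp [comp]
    simp only [e1]
    have hd1 : ((n:ℤ)+1 + M) / 2 = (p' : ℤ) + 1 := by omega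
    have hd2 : ((n:ℤ)+1 - M) / 2 = (q' : ℤ) + 1 := by omega
    have hc1 : (((n+1):ℕ):ℤ) = (n:ℤ) + 1 := by push_cast; ring
    have hc2 : (((S'+1):ℕ):ℤ) - 1 = ((S':ℕ):ℤ) := by push_cast; ring
    have hc3 : (((S'+1):ℕ):ℤ) = (((S'+1):ℕ):ℤ) := rfl
    have i1 : intChoose (((((n+1):ℕ):ℤ) + M) / 2 - 1) ((((S'+1):ℕ):ℤ) - 1) = p'.choose S' := by
      rw [hc1, hc2, hd1, show ((p':ℤ)+1-1) = ((p':ℕ):ℤ) by ring]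
      exact intChoose_natCast p' S'
    have i2 : intChoose (((((n+1):ℕ):ℤ) - M) / 2) ((((S'+1):ℕ):ℤ)) = (q'+1).choose (S'+1) := by
      rw [hc1, hd2, show ((q':ℤ)+1) = ((q'+1 : ℕ) : ℤ) by push_cast; ring]
      exact intChoose_natCast (q'+1) (S'+1)
    have i3 : intChoose (((((n+1):ℕ):ℤ) - M) / 2 - 1) ((((S'+1):ℕ):ℤ) - 1) = q'.choose S' := by
      rw [hc1, hc2, hd2, show ((q':ℤ)+1-1) = ((q':ℕ):ℤ) by ring]
      exact intChoose_natCast q' S'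
    have i4 : intChoose (((((n+1):ℕ):ℤ) + M) / 2) ((((S'+1):ℕ):ℤ)) = (p'+1).choose (S'+1) := by
      rw [hc1, hd1, show ((p':ℤ)+1) = ((p'+1 : ℕ) : ℤ) by push_cast; ring]
      exact intChoose_natCast (p'+1) (S'+1)
    rw [i1, i2, i3, i4]
    rw [Nat.choose_succ_succ p' S', Nat.choose_succ_succ q' S']
    ring
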